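/- arXiv:1710.00899 — 2 statements merged into one kernel-verified Lean document; each statement's English description precedes it below -/
import Mathlib

section
/- Let H be a self-adjoint operator on a Hilbert space ℋ, bounded from below, and Y ≥ 0 a bounded operator. For t ≥ 0 let E(t) = inf spec(H + tY) and E(∞) = sup_{t≥0} E(t). Suppose E(∞) > E(0), let E₁ ∈ (E(0), E(∞)), and set κ = sup_{s>0, E(s)>E₁} (E(s) − E₁)/s. Then for every bounded operator V ≥ 0 on ℋ and every Borel set B ⊆ (−∞, E₁], the spectral projection P = χ_B(H + V) satisfies P Y P ≥ κ P in the sense of quadratic forms. -/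
open scoped InnerProductSpace

set_option maxHeartbeats 1000000

/-- Rayleigh-quotient lower bound: for a self-adjoint bounded operator `A`,
`inf spec(A) * ‖φ‖² ≤ re ⟪φ, A φ⟫`. -/
lemma sInf_spectrum_mul_sq_norm_le {𝓗 : Type*} [NormedAddCommGroup 𝓗] [InnerProductSpace ℂ 𝓗]
    [CompleteSpace 𝓗]
    (A : 𝓗 →L[ℂ] 𝓗) (hA : IsSelfAdjoint A) (φ : 𝓗) :
    sInf (spectrum ℝ A) * ‖φ‖ ^ 2 ≤ (⟪φ, A φ⟫_ℂ).re := by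
  set m := sInf (spectrum ℝ A)
  have h1 : algebraMap ℝ (𝓗 →L[ℂ] 𝓗) m ≤ A := by
    apply algebraMap_le_of_le_spectrum
    · intro x hx
      exact csInf_le (spectrum.isBounded A).bddBelow hx
    · exact hA
  rw [← sub_nonneg, ContinuousLinearMap.nonneg_iff_isPositive] at h1
  have h2 := h1.inner_nonneg_right φ
  have hm : ((algebraMap ℝ (𝓗 →L[ℂ] 𝓗) m) φ) = (m : ℂ) • φ := by
    simp [Algebra.algebraMap_eq_smul_one]
  rw [ContinuousLinearMap.sub_apply, inner_sub_right, hm, inner_smul_right] at h2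
  replace h2 := (Complex.nonneg_iff.mp h2).1
  rw [Complex.sub_re] at h2
  have : ((m : ℂ) * ⟪φ, φ⟫_ℂ).re = m * ‖φ‖ ^ 2 := by
    rw [inner_self_eq_norm_sq_to_K]
    simp [Complex.mul_re, ← Complex.ofReal_pow]
  linarith

/-- (Abstract uncertainty principle, Lemma 4.1 of Klein.)
`H` self-adjoint bounded below, `Y ≥ 0` bounded, `E t = inf spec (H + tY)`,
`E ∞ = sup_{t ≥ 0} E t > E 0`, `E₁ ∈ (E 0, E ∞)`,
`κ = sup_{s>0, E s > E₁} (E s − E₁)/s`.  For every bounded `V ≥ 0` and every Borel set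
`B ⊆ (−∞, E₁]`, the spectral projection `P = χ_B (H + V)` satisfies `P Y P ≥ κ P`.
The spectral projection is encoded by the properties: `P` is an orthogonal projection
commuting with `H + V`, and on its range the quadratic form of `H + V` is bounded by `E₁`
(which is what `B ⊆ (−∞, E₁]` yields). -/
theorem statement1
    {𝓗 : Type*} [NormedAddCommGroup 𝓗] [InnerProductSpace ℂ 𝓗] [CompleteSpace 𝓗]
    (H Y V : 𝓗 →L[ℂ] 𝓗) (hH : IsSelfAdjoint H) (hY : IsSelfAdjoint Y)
    (hV : IsSelfAdjoint V)
    (hYpos : ∀ ψ : 𝓗, 0 ≤ (⟪ψ, Y ψ⟫_ℂ).re)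
    (hVpos : ∀ ψ : 𝓗, 0 ≤ (⟪ψ, V ψ⟫_ℂ).re)
    (En : ℝ → ℝ) (hEn : ∀ t : ℝ, En t = sInf (spectrum ℝ (H + t • Y)))
    (Einf : ℝ) (hEinf : Einf = sSup {r : ℝ | ∃ t : ℝ, 0 ≤ t ∧ r = En t})
    (hgap : En 0 < Einf)
    (E₁ : ℝ) (hE₁ : En 0 < E₁) (hE₁' : E₁ < Einf)
    (κ : ℝ) (hκ : κ = sSup {x : ℝ | ∃ s : ℝ, 0 < s ∧ E₁ < En s ∧ x = (En s - E₁) / s})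
    (P : 𝓗 →L[ℂ] 𝓗) (hP : IsSelfAdjoint P) (hP2 : P ∘L P = P)
    (hPcomm : P ∘L (H + V) = (H + V) ∘L P)
    (hPB : ∀ ψ : 𝓗, (⟪P ψ, (H + V) (P ψ)⟫_ℂ).re ≤ E₁ * ‖P ψ‖ ^ 2) :
    ∀ ψ : 𝓗, κ * ‖P ψ‖ ^ 2 ≤ (⟪P ψ, Y (P ψ)⟫_ℂ).re := by
  intro ψ
  set φ := P ψ with hφ
  by_cases hz : φ = 0
  · simp [hz]
  · have hn0 : 0 < ‖φ‖ := norm_pos_iff.mpr hz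
    have hn : 0 < ‖φ‖ ^ 2 := by positivity
    set r := (⟪φ, Y φ⟫_ℂ).re with hr
    have hr0 : 0 ≤ r := hYpos φ
    have hHle : (⟪φ, H φ⟫_ℂ).re ≤ E₁ * ‖φ‖ ^ 2 := by
      have h := hPB ψ
      have hVφ := hVpos φ
      rw [ContinuousLinearMap.add_apply, inner_add_right, Complex.add_re] at h
      linarith
    have key : κ ≤ r / ‖φ‖ ^ 2 := by
      rw [hκ]
      apply Real.sSup_le
      · rintro x ⟨s, hs, hEs, rfl⟩
        have hsY : IsSelfAdjoint (s • Y) := by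
          rw [IsSelfAdjoint, star_smul, star_trivial, hY]
        have hA : IsSelfAdjoint (H + s • Y) := hH.add hsY
        have h1 := sInf_spectrum_mul_sq_norm_le (H + s • Y) hA φ
        rw [← hEn s] at h1
        have h2 : ((H + s • Y) φ) = H φ + (s : ℂ) • (Y φ) := by
          simp [ContinuousLinearMap.add_apply]
        rw [h2, inner_add_right, Complex.add_re, inner_smul_right] at h1
        have h3 : ((s : ℂ) * ⟪φ, Y φ⟫_ℂ).re = s * r := by
          simp [Complex.mul_re, hr]
        rw [h3] at h1
        rw [div_le_div_iff₀ hs hn]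
        nlinarith
      · positivity
    calc κ * ‖φ‖ ^ 2 ≤ (r / ‖φ‖ ^ 2) * ‖φ‖ ^ 2 := by nlinarith
      _ = r := by field_simp
end

section
/- Let (T_n) be a sequence of bounded self-adjoint operators on a Hilbert space converging strongly to a bounded self-adjoint operator T, i.e., T_n φ → T φ for every φ. Suppose each T_n and T are nonnegative and compact, and the convergence is monotone: T_n ≥ T_{n+1} ≥ T ≥ 0. Then for each k, the k-th largest eigenvalue of T_n converges to the k-th largest eigenvalue of T, and the convergence is from above. -/
open Filter
open scoped InnerProductSpace

/-- The `k`-th largest eigenvalue of a compact nonnegative self-adjoint operator `T`, given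
by the max-min principle: the supremum over `k`-dimensional subspaces `V` of the infimum of
`⟨ψ, Tψ⟩` over unit vectors `ψ ∈ V`. -/
noncomputable def maxMinValue {𝓗 : Type*} [NormedAddCommGroup 𝓗] [InnerProductSpace ℂ 𝓗]
    (T : 𝓗 →L[ℂ] 𝓗) (k : ℕ) : ℝ :=
  sSup {r : ℝ | ∃ V : Submodule ℂ 𝓗, Module.finrank ℂ V = k ∧
    r = sInf {s : ℝ | ∃ ψ ∈ V, ‖ψ‖ = 1 ∧ s = (⟪ψ, T ψ⟫_ℂ).re}}

set_option linter.unusedSectionVars false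

section Aux

variable {𝓗 : Type*} [NormedAddCommGroup 𝓗] [InnerProductSpace ℂ 𝓗]


noncomputable def innerVals (A : 𝓗 →L[ℂ] 𝓗) (V : Submodule ℂ 𝓗) : Set ℝ :=
  {s : ℝ | ∃ ψ ∈ V, ‖ψ‖ = 1 ∧ s = (⟪ψ, A ψ⟫_ℂ).re}

noncomputable def outerVals (A : 𝓗 →L[ℂ] 𝓗) (k : ℕ) : Set ℝ :=
  {r : ℝ | ∃ V : Submodule ℂ 𝓗, Module.finrank ℂ V = k ∧ r = sInf (innerVals A V)}

lemma maxMinValue_eq (A : 𝓗 →L[ℂ] 𝓗) (k : ℕ) : maxMinValue A k = sSup (outerVals A k) := rfl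

lemma exists_unit_of_finrank {V : Submodule ℂ 𝓗} {k : ℕ} (hk : 1 ≤ k)
    (hV : Module.finrank ℂ V = k) : ∃ ψ, ψ ∈ V ∧ ‖ψ‖ = 1 := by
  have hbot : V ≠ ⊥ := by
    intro h
    subst h
    rw [finrank_bot] at hV
    omega
  obtain ⟨x, hxV, hx0⟩ := Submodule.ne_bot_iff V |>.mp hbot
  have hxn : ‖x‖ ≠ 0 := norm_ne_zero_iff.mpr hx0
  refine ⟨((‖x‖⁻¹ : ℝ) : ℂ) • x, V.smul_mem _ hxV, ?_⟩
  rw [norm_smul]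
  simp only [Complex.norm_real, Real.norm_eq_abs, abs_inv, abs_norm]
  field_simp

lemma maxMin_le (A B : 𝓗 →L[ℂ] 𝓗) (k : ℕ) (hk : 1 ≤ k)
    (hA : ∀ ψ : 𝓗, 0 ≤ (⟪ψ, A ψ⟫_ℂ).re) (hB : ∀ ψ : 𝓗, 0 ≤ (⟪ψ, B ψ⟫_ℂ).re)
    (C : ℝ) (hBC : ∀ ψ : 𝓗, ‖ψ‖ = 1 → (⟪ψ, B ψ⟫_ℂ).re ≤ C)
    (c : ℝ) (hc : 0 ≤ c)
    (hcomp : ∀ ψ : 𝓗, ‖ψ‖ = 1 → (⟪ψ, A ψ⟫_ℂ).re ≤ (⟪ψ, B ψ⟫_ℂ).re + c) :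
    maxMinValue A k ≤ maxMinValue B k + c := by
  classical
  rw [maxMinValue_eq, maxMinValue_eq]
  by_cases hV : ∃ V : Submodule ℂ 𝓗, Module.finrank ℂ V = k
  · obtain ⟨V₀, hV₀⟩ := hV
    have hSAbdd : ∀ V : Submodule ℂ 𝓗, BddBelow (innerVals A V) := by
      intro V
      refine ⟨0, ?_⟩
      rintro s ⟨ψ, hψV, hψ, rfl⟩
      exact hA ψ
    have hSBbdd : ∀ V : Submodule ℂ 𝓗, BddBelow (innerVals B V) := by
      intro V
      refine ⟨0, ?_⟩
      rintro s ⟨ψ, hψV, hψ, rfl⟩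
      exact hB ψ
    have hSne : ∀ (S : 𝓗 →L[ℂ] 𝓗) (V : Submodule ℂ 𝓗), Module.finrank ℂ V = k →
        (innerVals S V).Nonempty := by
      intro S V hVk
      obtain ⟨ψ, hψV, hψ⟩ := exists_unit_of_finrank hk hVk
      exact ⟨_, ψ, hψV, hψ, rfl⟩
    have key : ∀ V : Submodule ℂ 𝓗, Module.finrank ℂ V = k →
        sInf (innerVals A V) ≤ sInf (innerVals B V) + c := by
      intro V hVk
      have h1 : sInf (innerVals A V) - c ≤ sInf (innerVals B V) := by
        apply le_csInf (hSne B V hVk)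
        rintro b ⟨ψ, hψV, hψ, rfl⟩
        have h2 : sInf (innerVals A V) ≤ (⟪ψ, A ψ⟫_ℂ).re :=
          csInf_le (hSAbdd V) ⟨ψ, hψV, hψ, rfl⟩
        linarith [hcomp ψ hψ]
      linarith
    have hRBbdd : BddAbove (outerVals B k) := by
      refine ⟨C, ?_⟩
      rintro r ⟨V, hVk, rfl⟩
      obtain ⟨ψ₀, hψ₀V, hψ₀⟩ := exists_unit_of_finrank hk hVk
      exact (csInf_le (hSBbdd V) ⟨ψ₀, hψ₀V, hψ₀, rfl⟩).trans (hBC ψ₀ hψ₀)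
    have hRAne : (outerVals A k).Nonempty := ⟨_, V₀, hV₀, rfl⟩
    apply csSup_le hRAne
    rintro r ⟨V, hVk, rfl⟩
    calc sInf (innerVals A V) ≤ sInf (innerVals B V) + c := key V hVk
      _ ≤ sSup (outerVals B k) + c := by
          have := le_csSup hRBbdd (⟨V, hVk, rfl⟩ : sInf (innerVals B V) ∈ outerVals B k)
          linarith
  · have hAe : outerVals A k = ∅ := by
      ext r; simp only [outerVals, Set.mem_setOf_eq, Set.mem_empty_iff_false, iff_false]
      rintro ⟨V, hVk, -⟩
      exact hV ⟨V, hVk⟩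
    have hBe : outerVals B k = ∅ := by
      ext r; simp only [outerVals, Set.mem_setOf_eq, Set.mem_empty_iff_false, iff_false]
      rintro ⟨V, hVk, -⟩
      exact hV ⟨V, hVk⟩
    rw [hAe, hBe, Real.sSup_empty]
    linarith

end Aux

section Aux2

variable {𝓗 : Type*} [NormedAddCommGroup 𝓗] [InnerProductSpace ℂ 𝓗] [CompleteSpace 𝓗]


noncomputable def qf (A : 𝓗 →L[ℂ] 𝓗) (ψ : 𝓗) : ℝ := (⟪ψ, A ψ⟫_ℂ).re

lemma re_symm {S : 𝓗 →L[ℂ] 𝓗} (hS : IsSelfAdjoint S) (u v : 𝓗) :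
    (⟪u, S v⟫_ℂ).re = (⟪v, S u⟫_ℂ).re := by
  have h : ⟪S u, v⟫_ℂ = ⟪u, S v⟫_ℂ := (ContinuousLinearMap.isSelfAdjoint_iff_isSymmetric.mp hS) u v
  have h3 : (⟪u, S v⟫_ℂ).re = (⟪S u, v⟫_ℂ).re := congrArg Complex.re h.symm
  have h4 : (⟪S u, v⟫_ℂ).re = (⟪v, S u⟫_ℂ).re := by
    simpa using inner_re_symm (𝕜 := ℂ) (S u) v
  exact h3.trans h4

lemma qf_expand {S : 𝓗 →L[ℂ] 𝓗} (hS : IsSelfAdjoint S) (x y : 𝓗) (t : ℝ) :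
    qf S (x + (t : ℂ) • y) = qf S y * (t * t) + (2 * (⟪x, S y⟫_ℂ).re) * t + qf S x := by
  have hsm : S ((t : ℂ) • y) = (t : ℂ) • S y := map_smul S _ _
  simp only [qf, map_add, hsm, inner_add_left, inner_add_right, inner_smul_left,
    inner_smul_right, Complex.add_re, Complex.mul_re, Complex.conj_ofReal,
    Complex.ofReal_re, Complex.ofReal_im]
  have h2 : t * (⟪y, S x⟫_ℂ).re = t * (⟪x, S y⟫_ℂ).re := by rw [← re_symm hS x y]
  ring_nf
  ring_nf at h2
  linarith [h2]

lemma qf_cs {S : 𝓗 →L[ℂ] 𝓗} (hS : IsSelfAdjoint S) (hpos : ∀ χ, 0 ≤ qf S χ) (x y : 𝓗) :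
    (⟪x, S y⟫_ℂ).re ^ 2 ≤ qf S x * qf S y := by
  have key : ∀ t : ℝ, 0 ≤ qf S y * (t * t) + (2 * (⟪x, S y⟫_ℂ).re) * t + qf S x := by
    intro t; rw [← qf_expand hS x y t]; exact hpos _
  have hd := discrim_le_zero key
  rw [discrim] at hd
  nlinarith [hd]

lemma qf_le_norm (A : 𝓗 →L[ℂ] 𝓗) (χ : 𝓗) : qf A χ ≤ ‖χ‖ * ‖A χ‖ := by
  refine le_trans (Complex.re_le_norm _) ?_
  exact norm_inner_le_norm χ (A χ)

lemma term_bound {S S₀ : 𝓗 →L[ℂ] 𝓗} (hS : IsSelfAdjoint S) (hpos : ∀ χ, 0 ≤ qf S χ)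
    (hle : ∀ χ, qf S χ ≤ qf S₀ χ) (u w : 𝓗) (hu : ‖u‖ ≤ 2) (hw : ‖w‖ = 1) :
    (⟪u, S w⟫_ℂ).re ≤ Real.sqrt (2 * ‖S₀ u‖) * Real.sqrt ‖S₀‖ := by
  have hq1 : qf S u ≤ 2 * ‖S₀ u‖ := by
    refine le_trans (hle u) (le_trans (qf_le_norm S₀ u) ?_)
    exact mul_le_mul_of_nonneg_right hu (norm_nonneg _)
  have hq2 : qf S w ≤ ‖S₀‖ := by
    refine le_trans (hle w) (le_trans (qf_le_norm S₀ w) ?_)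
    rw [hw, one_mul]
    simpa [hw] using S₀.le_opNorm w
  have hcs := qf_cs hS hpos u w
  have hx : (⟪u, S w⟫_ℂ).re ^ 2 ≤ (2 * ‖S₀ u‖) * ‖S₀‖ :=
    le_trans hcs (mul_le_mul hq1 hq2 (hpos w) (by positivity))
  calc (⟪u, S w⟫_ℂ).re ≤ |(⟪u, S w⟫_ℂ).re| := le_abs_self _
    _ = Real.sqrt ((⟪u, S w⟫_ℂ).re ^ 2) := (Real.sqrt_sq_eq_abs _).symm
    _ ≤ Real.sqrt ((2 * ‖S₀ u‖) * ‖S₀‖) := Real.sqrt_le_sqrt hx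
    _ = Real.sqrt (2 * ‖S₀ u‖) * Real.sqrt ‖S₀‖ := Real.sqrt_mul (by positivity) _

lemma qf_diff_le {S S₀ : 𝓗 →L[ℂ] 𝓗} (hS : IsSelfAdjoint S) (hpos : ∀ χ, 0 ≤ qf S χ)
    (hle : ∀ χ, qf S χ ≤ qf S₀ χ) (ψ φ : 𝓗) (hψ : ‖ψ‖ = 1) (hφ : ‖φ‖ = 1) :
    qf S ψ ≤ qf S φ + 2 * (Real.sqrt (2 * ‖S₀ (ψ - φ)‖) * Real.sqrt ‖S₀‖) := by
  have hdiff : qf S ψ - qf S φ = (⟪ψ - φ, S ψ⟫_ℂ).re + (⟪ψ - φ, S φ⟫_ℂ).re := by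
    have e1 : (⟪ψ - φ, S ψ⟫_ℂ).re = qf S ψ - (⟪φ, S ψ⟫_ℂ).re := by
      simp [qf, inner_sub_left]
    have e2 : (⟪ψ - φ, S φ⟫_ℂ).re = (⟪ψ, S φ⟫_ℂ).re - qf S φ := by
      simp [qf, inner_sub_left]
    have e3 := re_symm hS φ ψ
    rw [e1, e2]
    linarith [e3]
  have hu : ‖ψ - φ‖ ≤ 2 := by
    calc ‖ψ - φ‖ ≤ ‖ψ‖ + ‖φ‖ := norm_sub_le _ _
      _ = 2 := by rw [hψ, hφ]; norm_num
  have t1 := term_bound hS hpos hle (ψ - φ) ψ hu hψ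
  have t2 := term_bound hS hpos hle (ψ - φ) φ hu hφ
  linarith [t1, t2]

lemma qf_sub' (A B : 𝓗 →L[ℂ] 𝓗) (ψ : 𝓗) : qf (A - B) ψ = qf A ψ - qf B ψ := by
  simp [qf, inner_sub_right]

lemma uniform_small
    (T : ℕ → 𝓗 →L[ℂ] 𝓗) (Tlim : 𝓗 →L[ℂ] 𝓗)
    (hTsa : ∀ n, IsSelfAdjoint (T n)) (hTlimsa : IsSelfAdjoint Tlim)
    (hTcomp : IsCompactOperator (T 0)) (hTlimcomp : IsCompactOperator Tlim)
    (hmono : ∀ n : ℕ, ∀ ψ : 𝓗, (⟪ψ, T (n + 1) ψ⟫_ℂ).re ≤ (⟪ψ, T n ψ⟫_ℂ).re)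
    (hdom : ∀ n : ℕ, ∀ ψ : 𝓗, (⟪ψ, Tlim ψ⟫_ℂ).re ≤ (⟪ψ, T n ψ⟫_ℂ).re)
    (hstrong : ∀ φ : 𝓗, Tendsto (fun n => T n φ) atTop (nhds (Tlim φ)))
    {ε : ℝ} (hε : 0 < ε) :
    ∃ N, ∀ n ≥ N, ∀ ψ : 𝓗, ‖ψ‖ = 1 → (⟪ψ, T n ψ⟫_ℂ).re ≤ (⟪ψ, Tlim ψ⟫_ℂ).re + ε := by
  classical
  set D : ℕ → 𝓗 →L[ℂ] 𝓗 := fun n => T n - Tlim with hD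
  have hDsa : ∀ n, IsSelfAdjoint (D n) := fun n => (hTsa n).sub hTlimsa
  have hDpos : ∀ n χ, 0 ≤ qf (D n) χ := by
    intro n χ; rw [hD, qf_sub']; exact sub_nonneg.mpr (hdom n χ)
  have hanti : ∀ χ : 𝓗, Antitone (fun n => (⟪χ, T n χ⟫_ℂ).re) := fun χ =>
    antitone_nat_of_succ_le (fun n => hmono n χ)
  have hDle : ∀ n χ, qf (D n) χ ≤ qf (D 0) χ := by
    intro n χ
    rw [hD, qf_sub', qf_sub']
    have := hanti χ (Nat.zero_le n)
    simp only [qf]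
    linarith [this]
  have hD0comp : IsCompactOperator (D 0) := by
    have := hTcomp.sub hTlimcomp
    have he : ⇑(D 0) = ⇑(T 0) - ⇑Tlim := by
      ext x; simp [hD]
    rw [he]; exact this
  -- totally bounded image of the unit sphere
  have hbdd : Bornology.IsBounded (Metric.sphere (0 : 𝓗) 1) :=
    Metric.isBounded_closedBall.subset Metric.sphere_subset_closedBall
  obtain ⟨K, hKcomp, hKsub⟩ :=
    IsCompactOperator.image_subset_compact_of_bounded (𝕜₁ := ℂ)
      (f := ((D 0 : 𝓗 →L[ℂ] 𝓗) : 𝓗 →ₗ[ℂ] 𝓗)) hD0comp hbdd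
  have tb : TotallyBounded (⇑(D 0) '' Metric.sphere (0 : 𝓗) 1) :=
    hKcomp.totallyBounded.subset hKsub
  set M : ℝ := ‖(D 0 : 𝓗 →L[ℂ] 𝓗)‖ with hM
  have hM0 : 0 ≤ M := norm_nonneg _
  set δ : ℝ := ε ^ 2 / (32 * (M + 1)) with hδdef
  have hδ : 0 < δ := by positivity
  obtain ⟨t, htsub, htfin, htcov⟩ :=
    totallyBounded_iff_subset.mp tb _ (Metric.dist_mem_uniformity hδ)
  haveI := htfin.to_subtype
  choose f hf1 hf2 using fun y : t => htsub y.2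
  -- pointwise convergence on the finitely many chosen points
  have hptw : ∀ y : t, Tendsto (fun n => qf (D n) (f y)) atTop (nhds 0) := by
    intro y
    have hc : Continuous fun v : 𝓗 => (⟪f y, v⟫_ℂ).re :=
      Complex.continuous_re.comp (continuous_const.inner continuous_id)
    have h2 : Tendsto (fun n => (⟪f y, T n (f y)⟫_ℂ).re) atTop
        (nhds ((⟪f y, Tlim (f y)⟫_ℂ).re)) := (hc.tendsto _).comp (hstrong (f y))
    have h3 := h2.sub (tendsto_const_nhds
      (x := (⟪f y, Tlim (f y)⟫_ℂ).re) (f := atTop))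
    simp only [sub_self] at h3
    convert h3 using 2 with n
    rw [hD, qf_sub']; rfl
  have hev : ∀ᶠ n in atTop, ∀ y : t, qf (D n) (f y) ≤ ε / 2 := by
    rw [eventually_all]
    intro y
    exact ((hptw y).eventually_lt_const (by linarith : (0:ℝ) < ε / 2)).mono
      fun n hn => le_of_lt hn
  obtain ⟨N, hN⟩ := eventually_atTop.mp hev
  refine ⟨N, fun n hn ψ hψ => ?_⟩
  -- find a nearby point in the net
  have hmemψ : (D 0) ψ ∈ ⇑(D 0) '' Metric.sphere (0 : 𝓗) 1 :=
    ⟨ψ, by simp [hψ], rfl⟩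
  obtain ⟨y, hy, hxy⟩ := Set.mem_iUnion₂.mp (htcov hmemψ)
  have hdist : dist ((D 0) ψ) y < δ := hxy
  set φy : 𝓗 := f ⟨y, hy⟩ with hφydef
  have hφsph : φy ∈ Metric.sphere (0 : 𝓗) 1 := hf1 ⟨y, hy⟩
  have hφnorm : ‖φy‖ = 1 := by simpa using hφsph
  have hnorm : ‖(D 0) (ψ - φy)‖ < δ := by
    rw [map_sub]
    have : y = (D 0) φy := (hf2 ⟨y, hy⟩).symm
    rw [← dist_eq_norm, ← this]
    exact hdist
  have hmain := qf_diff_le (hDsa n) (hDpos n) (hDle n) ψ φy hψ hφnorm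
  have hterm : Real.sqrt (2 * ‖(D 0) (ψ - φy)‖) * Real.sqrt ‖(D 0 : 𝓗 →L[ℂ] 𝓗)‖
      ≤ ε / 4 := by
    have e1 : Real.sqrt (2 * ‖(D 0) (ψ - φy)‖) * Real.sqrt ‖(D 0 : 𝓗 →L[ℂ] 𝓗)‖
        ≤ Real.sqrt (2 * δ) * Real.sqrt (M + 1) := by
      refine mul_le_mul (Real.sqrt_le_sqrt (by linarith [hnorm]))
        (Real.sqrt_le_sqrt (by simp [hM])) (Real.sqrt_nonneg _) (Real.sqrt_nonneg _)
    have e2 : Real.sqrt (2 * δ) * Real.sqrt (M + 1) = Real.sqrt (2 * δ * (M + 1)) :=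
      (Real.sqrt_mul (by positivity) _).symm
    have e3 : 2 * δ * (M + 1) = (ε / 4) ^ 2 := by
      rw [hδdef]; field_simp; ring
    have e4 : Real.sqrt (2 * δ * (M + 1)) = ε / 4 := by
      rw [e3, Real.sqrt_sq (by positivity)]
    linarith [e1, e2.le, e4.le, e2.ge, e4.ge]
  have hfin : qf (D n) ψ ≤ ε := by
    have hy2 : qf (D n) φy ≤ ε / 2 := hN n hn ⟨y, hy⟩
    linarith [hmain, hterm, hy2]
  rw [hD, qf_sub'] at hfin
  simp only [qf] at hfin
  linarith [hfin]

end Aux2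

/-- Let `(T n)` be compact nonnegative self-adjoint operators converging
strongly to a compact nonnegative self-adjoint operator `T`, monotonically:
`T n ≥ T (n+1) ≥ T ≥ 0`.  Then for each `k ≥ 1` the `k`-th largest eigenvalue (max-min
value) of `T n` converges to that of `T`, and the convergence is from above. -/
theorem statement17
    {𝓗 : Type*} [NormedAddCommGroup 𝓗] [InnerProductSpace ℂ 𝓗] [CompleteSpace 𝓗]
    [TopologicalSpace.SeparableSpace 𝓗]
    (T : ℕ → 𝓗 →L[ℂ] 𝓗) (Tlim : 𝓗 →L[ℂ] 𝓗)
    (hTsa : ∀ n, IsSelfAdjoint (T n)) (hTlimsa : IsSelfAdjoint Tlim)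
    (hTcomp : ∀ n, IsCompactOperator (T n)) (hTlimcomp : IsCompactOperator Tlim)
    (hTlimpos : ∀ ψ : 𝓗, 0 ≤ (⟪ψ, Tlim ψ⟫_ℂ).re)
    (hmono : ∀ n : ℕ, ∀ ψ : 𝓗, (⟪ψ, T (n + 1) ψ⟫_ℂ).re ≤ (⟪ψ, T n ψ⟫_ℂ).re)
    (hdom : ∀ n : ℕ, ∀ ψ : 𝓗, (⟪ψ, Tlim ψ⟫_ℂ).re ≤ (⟪ψ, T n ψ⟫_ℂ).re)
    (hstrong : ∀ φ : 𝓗, Tendsto (fun n => T n φ) atTop (nhds (Tlim φ))) :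
    ∀ k : ℕ, 1 ≤ k →
      Tendsto (fun n => maxMinValue (T n) k) atTop (nhds (maxMinValue Tlim k)) ∧
      ∀ n : ℕ, maxMinValue Tlim k ≤ maxMinValue (T n) k := by
  intro k hk
  have hanti : ∀ ψ : 𝓗, Antitone (fun n => (⟪ψ, T n ψ⟫_ℂ).re) := fun ψ =>
    antitone_nat_of_succ_le (fun n => hmono n ψ)
  have hbound : ∀ n : ℕ, ∀ ψ : 𝓗, ‖ψ‖ = 1 → (⟪ψ, T n ψ⟫_ℂ).re ≤ ‖T 0‖ := by
    intro n ψ hψ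
    have h1 := hanti ψ (Nat.zero_le n)
    have h2 := qf_le_norm (T 0) ψ
    simp only [qf] at h2
    have h3 : ‖T 0 ψ‖ ≤ ‖T 0‖ * ‖ψ‖ := (T 0).le_opNorm ψ
    rw [hψ] at h2 h3
    simp only at h1
    linarith
  have hboundlim : ∀ ψ : 𝓗, ‖ψ‖ = 1 → (⟪ψ, Tlim ψ⟫_ℂ).re ≤ ‖T 0‖ :=
    fun ψ hψ => (hdom 0 ψ).trans (hbound 0 ψ hψ)
  have hTnpos : ∀ n : ℕ, ∀ ψ : 𝓗, 0 ≤ (⟪ψ, T n ψ⟫_ℂ).re :=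
    fun n ψ => le_trans (hTlimpos ψ) (hdom n ψ)
  have hlow : ∀ n, maxMinValue Tlim k ≤ maxMinValue (T n) k := by
    intro n
    have h := maxMin_le Tlim (T n) k hk hTlimpos (hTnpos n) ‖T 0‖
      (fun ψ hψ => hbound n ψ hψ) 0 le_rfl (fun ψ _ => by simpa using hdom n ψ)
    simpa using h
  refine ⟨?_, hlow⟩
  rw [Metric.tendsto_atTop]
  intro ε hε
  obtain ⟨N, hN⟩ := uniform_small T Tlim hTsa hTlimsa (hTcomp 0) hTlimcomp hmono hdom
    hstrong (half_pos hε)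
  refine ⟨N, fun n hn => ?_⟩
  have hup : maxMinValue (T n) k ≤ maxMinValue Tlim k + ε / 2 :=
    maxMin_le (T n) Tlim k hk (hTnpos n) hTlimpos ‖T 0‖ hboundlim (ε / 2)
      (le_of_lt (half_pos hε)) (fun ψ hψ => hN n hn ψ hψ)
  have hlo := hlow n
  rw [Real.dist_eq, abs_lt]
  constructor <;> linarith [half_lt_self hε]
end
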